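/- The map φ : EW_{m,n} → LRib_{m,n} is injective: if A, B are rectangular EW-tableaux with m rows and n columns and φ(A) = φ(B), then A = B. -/

import Mathlib

/- Combinatorial objects from "EW-tableaux and parallelogram polyominoes".
A tableau of type `(m+1, n+1)` (i.e. with `m+1` rows and `n+1` columns) is a
0/1-filling, encoded as a function to `Bool` (`true` = 1).  Rows are indexed
top to bottom, columns left to right, both starting at `0`.  The row labelled
`v i` (for `i < m+1`) and the column labelled `v ((m+1)+j)` (for `j < n+1`)
are recorded through permutations `rl`, `cl` of `Fin (m+1)`, `Fin (n+1)`. -/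

namespace EWPaper

/-- A 0/1 tableau with `m+1` rows and `n+1` columns; `true` encodes the entry 1. -/
abbrev Tab (m n : ℕ) := Fin (m + 1) → Fin (n + 1) → Bool

variable {m n : ℕ}

/-- A rectangular EW-tableau: the top row is all 1s, every other row contains a 0,
and no four cells forming the corners of a rectangle carry 0s in two diagonally
opposite corners and 1s in the other two. -/
def IsEW (T : Tab m n) : Prop :=
  (∀ j, T 0 j = true) ∧
  (∀ i : Fin (m + 1), i ≠ 0 → ∃ j, T i j = false) ∧
  (∀ (i i' : Fin (m + 1)) (j j' : Fin (n + 1)), i ≠ i' → j ≠ j' →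
    T i j = true → T i' j' = true → (T i j' = true ∨ T i' j = true))

/-- The (0-based) column index of the leftmost 1 of row `i`. -/
noncomputable def leftmost (T : Tab m n) (i : Fin (m + 1)) : ℕ :=
  sInf {j : ℕ | ∃ h : j < n + 1, T i ⟨j, h⟩ = true}

/-- The (0-based) column index of the rightmost 1 of row `i`. -/
noncomputable def rightmost (T : Tab m n) (i : Fin (m + 1)) : ℕ :=
  sSup {j : ℕ | ∃ h : j < n + 1, T i ⟨j, h⟩ = true}

/-- The (0-based) row index of the topmost 1 of column `j`. -/
noncomputable def topmost (T : Tab m n) (j : Fin (n + 1)) : ℕ :=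
  sInf {i : ℕ | ∃ h : i < m + 1, T ⟨i, h⟩ j = true}

/-- Parallelogram polyomino (as a 0/1 tableau): 1s in the two corners `(1,1)` and
`(m,n)`; every row has a nonempty contiguous set of 1s; leftmost and rightmost 1s
of the rows move weakly to the right going down. -/
def IsPara (T : Tab m n) : Prop :=
  T 0 0 = true ∧ T (Fin.last m) (Fin.last n) = true ∧
  (∀ i, ∃ j, T i j = true) ∧
  (∀ (i : Fin (m + 1)) (j j' j'' : Fin (n + 1)),
    j ≤ j' → j' ≤ j'' → T i j = true → T i j'' = true → T i j' = true) ∧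
  (∀ i i' : Fin (m + 1), i ≤ i' → leftmost T i ≤ leftmost T i') ∧
  (∀ i i' : Fin (m + 1), i ≤ i' → rightmost T i ≤ rightmost T i')

/-- The number of 1s of a tableau. -/
def ones (T : Tab m n) : ℕ :=
  (Finset.univ.filter fun p : Fin (m + 1) × Fin (n + 1) => T p.1 p.2 = true).card

/-- Ribbon parallelogram polyomino: a parallelogram polyomino of type `(m+1, n+1)`
with the minimal number `(m+1) + (n+1) - 1` of 1s. -/
def IsRib (T : Tab m n) : Prop := IsPara T ∧ ones T = m + n + 1

/-- A row- and column-labelled tableau: row `i` carries the label `v (rl i)` and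
column `j` carries the label `v ((m+1) + cl j)`. -/
structure Labelled (m n : ℕ) where
  T : Tab m n
  rl : Equiv.Perm (Fin (m + 1))
  cl : Equiv.Perm (Fin (n + 1))

/-- Labelled parallelogram polyomino: the underlying tableau is a parallelogram
polyomino, the top row is labelled `v 0`, rows whose leftmost 1s are the same
distance from the left side have labels increasing top to bottom, and columns
whose topmost 1s are at the same height have labels increasing left to right. -/
def IsLPara (D : Labelled m n) : Prop :=
  IsPara D.T ∧ D.rl 0 = 0 ∧
  (∀ i i' : Fin (m + 1), leftmost D.T i = leftmost D.T i' → i < i' → D.rl i < D.rl i') ∧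
  (∀ j j' : Fin (n + 1), topmost D.T j = topmost D.T j' → j < j' → D.cl j < D.cl j')

/-- Labelled ribbon parallelogram polyomino. -/
def IsLRib (D : Labelled m n) : Prop := IsLPara D ∧ ones D.T = m + n + 1

/-- Step 1 of `φ`: the stable sort of the columns by their number of 1s, ascending
(so that in an EW-tableau only 0s lie to the left of every 0), ties (identical
columns) broken by original label, increasing left to right. -/
def sortCols (T : Tab m n) : Equiv.Perm (Fin (n + 1)) :=
  Tuple.sort fun j => (Finset.univ.filter fun i => T i j = true).card

/-- Step 2 of `φ`: the stable sort of the rows by their number of 0s, ascending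
(so that in an EW-tableau only 1s lie above every 1), ties (identical rows)
broken by original label, increasing top to bottom. -/
def sortRows (T : Tab m n) : Equiv.Perm (Fin (m + 1)) :=
  Tuple.sort fun i => (Finset.univ.filter fun j => T i j = false).card

/-- The tableau `T'` of Steps 1–2 of `φ`. -/
def sortedTab (T : Tab m n) : Tab m n := fun i j => T (sortRows T i) (sortCols T j)

/-- Step 4 of `φ`: `R i j = 1` iff (`T' i j = 1` and (`i = m` or `T' (i+1) j = 0`)) or
(`T' i j = 0` and (`j = n` or `T' i (j+1) = 1`)). -/
def step4 (S : Tab m n) : Tab m n := fun i j =>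
  (S i j && decide (∀ i' : Fin (m + 1), (i' : ℕ) = (i : ℕ) + 1 → S i' j = false)) ||
  (!S i j && decide (∀ j' : Fin (n + 1), (j' : ℕ) = (j : ℕ) + 1 → S i j' = true))

/-- The map `φ`: sort rows and columns, apply Step 4, and remember, as the
labelling, where each row and column of the original tableau went. -/
def phi (T : Tab m n) : Labelled m n :=
  ⟨step4 (sortedTab T), sortRows T, sortCols T⟩

/-- The tableau `T'` of the definition of `ψ`:
`T'_{ij} = 1` iff `(i,j) = (1,1)` or there is `k < j` with `R i k = 1`. -/
def psiPre (R : Tab m n) : Tab m n := fun i j =>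
  decide ((i = 0 ∧ j = 0) ∨ ∃ k : Fin (n + 1), k < j ∧ R i k = true)

/-- The map `ψ`: form `psiPre` of the underlying tableau and permute rows and
columns so that row and column labels are increasing (row `i` of the result is
the row of `psiPre D.T` labelled `v i`, and similarly for columns). -/
def psi (D : Labelled m n) : Tab m n := fun i j =>
  psiPre D.T (D.rl.symm i) (D.cl.symm j)

/-- The entry of `T` at `(i, j)` is a cornersupport entry: there is a
non-attacking entry with the opposite value at `(i', j')` such that the
other two corners `(i', j)` and `(i, j')` carry the same value as `(i, j)`. -/
def Cornersupport (T : Tab m n) (i : Fin (m + 1)) (j : Fin (n + 1)) : Prop :=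
  ∃ (i' : Fin (m + 1)) (j' : Fin (n + 1)),
    i' ≠ i ∧ j' ≠ j ∧ T i' j' ≠ T i j ∧ T i' j = T i j ∧ T i j' = T i j

instance (T : Tab m n) (i : Fin (m + 1)) (j : Fin (n + 1)) :
    Decidable (Cornersupport T i j) := by
  unfold Cornersupport; infer_instance

/-- `η` of the row labelled `v i`: the number of non-cornersupport 0s in row `i`. -/
def etaRow (T : Tab m n) (i : Fin (m + 1)) : ℕ :=
  (Finset.univ.filter fun j => T i j = false ∧ ¬ Cornersupport T i j).card

/-- `η` of the column labelled `v ((m+1)+j)`: the number of non-cornersupport 1s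
in column `j`. -/
def etaCol (T : Tab m n) (j : Fin (n + 1)) : ℕ :=
  (Finset.univ.filter fun i => T i j = true ∧ ¬ Cornersupport T i j).card

/-- A marked/decorated rectangular EW-tableau: a tableau together with a
decoration value for each row below the first (recorded as `arow`, with the
normalisation `arow 0 = 0` for the unmarked top row) and each column (`acol`). -/
structure MEW (m n : ℕ) where
  T : Tab m n
  arow : Fin (m + 1) → ℕ
  acol : Fin (n + 1) → ℕ

/-- Membership in `MEW_{m+1,n+1}`: the tableau is an EW-tableau and the
decorations satisfy `0 ≤ a_i ≤ η_i(T) - 1`. -/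
def IsMEW (M : MEW m n) : Prop :=
  IsEW M.T ∧ M.arow 0 = 0 ∧
  (∀ i : Fin (m + 1), i ≠ 0 → M.arow i < etaRow M.T i) ∧
  (∀ j : Fin (n + 1), M.acol j < etaCol M.T j)

/-- The expansion `⟨D, ζ⟩` of a labelled ribbon parallelogram polyomino `D` by a
surplus vector `ζ` (indexed by labels): the row labelled `v i` gets `ζ i` cells
appended to the left of its leftmost 1, the column labelled `v ((m+1)+j)` gets
`ζ' j` cells appended above its topmost 1; the rows and columns are then
reordered so as to satisfy the labelling convention (sorted by the position of
the new leftmost/topmost 1, ties broken by increasing label) and the interior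
is completed with 1s. -/
noncomputable def expand (D : Labelled m n)
    (zrow : Fin (m + 1) → ℕ) (zcol : Fin (n + 1) → ℕ) : Labelled m n :=
  let ell : Fin (m + 1) → ℕ := fun x => leftmost D.T x - zrow (D.rl x)
  let top : Fin (n + 1) → ℕ := fun y => topmost D.T y - zcol (D.cl y)
  let σ : Equiv.Perm (Fin (m + 1)) := Tuple.sort fun x => toLex (ell x, (D.rl x : ℕ))
  let τ : Equiv.Perm (Fin (n + 1)) := Tuple.sort fun y => toLex (top y, (D.cl y : ℕ))
  ⟨fun i j => decide (ell (σ i) ≤ (j : ℕ) ∧ top (τ j) ≤ (i : ℕ)),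
    σ.trans D.rl, τ.trans D.cl⟩

/-- The map `Φ` from marked EW-tableaux to labelled parallelogram polyominoes:
`Φ(T, a) = ⟨φ(T), ζ⟩` where `ζ_i = η_i(T) - a_i - 1`. -/
noncomputable def Phi (M : MEW m n) : Labelled m n :=
  expand (phi M.T) (fun i => etaRow M.T i - M.arow i - 1)
    (fun j => etaCol M.T j - M.acol j - 1)

/-- ℕ-indexed version of `rightmost` (junk value for out-of-range rows). -/
noncomputable def rmaxN (P : Tab m n) (i : ℕ) : ℕ :=
  sSup {j : ℕ | ∃ (hi : i < m + 1) (hj : j < n + 1), P ⟨i, hi⟩ ⟨j, hj⟩ = true}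

/-- The lowest 1 of column `j` (ℕ-indexed, junk value for out-of-range columns). -/
noncomputable def bmaxN (P : Tab m n) (j : ℕ) : ℕ :=
  sSup {i : ℕ | ∃ (hi : i < m + 1) (hj : j < n + 1), P ⟨i, hi⟩ ⟨j, hj⟩ = true}

/-- The rows of the successive horizontal segments of the bounce path of `P`:
start in row 0; having arrived in row `i`, move right to the rightmost 1 of
row `i` and then down to the lowest 1 of that column. -/
noncomputable def bncI (P : Tab m n) : ℕ → ℕ
  | 0 => 0
  | k + 1 => bmaxN P (rmaxN P (bncI P k))

/-- The columns of the successive vertical segments of the bounce path of `P`. -/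
noncomputable def bncJ (P : Tab m n) (k : ℕ) : ℕ := rmaxN P (bncI P k)

/-- The cell `(i, j)` is visited by the bounce path of `P`: it lies on the `k`-th
horizontal segment (row `bncI k`, columns `bncJ (k-1)` to `bncJ k`, starting at
column 0 when `k = 0`) or on the `k`-th vertical segment (column `bncJ k`, rows
`bncI k` to `bncI (k+1)`) for some `k`. -/
def BounceCell (P : Tab m n) (i j : ℕ) : Prop :=
  ∃ k : ℕ,
    (i = bncI P k ∧ (match k with | 0 => 0 | k' + 1 => bncJ P k') ≤ j ∧ j ≤ bncJ P k) ∨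
    (j = bncJ P k ∧ bncI P k ≤ i ∧ i ≤ bncI P (k + 1))

/-- The bounce path of `P`, as the 0/1 tableau whose 1s are exactly the cells
visited by the bounce path. -/
noncomputable def bounceTab (P : Tab m n) : Tab m n := fun i j =>
  @decide (BounceCell P (i : ℕ) (j : ℕ)) (Classical.propDecidable _)

/-- `rl'` is the row labelling of the bounce ribbon of `D` induced by `D`:
within each class of rows of `bounce D.T` having their leftmost 1 in the same
column, the labels increase top to bottom, and each such class carries the same
set of labels as it does under the labelling of `D`. -/
def InducedRows (D : Labelled m n) (rl' : Equiv.Perm (Fin (m + 1))) : Prop :=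
  (∀ i i' : Fin (m + 1), leftmost (bounceTab D.T) i = leftmost (bounceTab D.T) i' →
    i < i' → rl' i < rl' i') ∧
  (∀ c : ℕ,
    (Finset.univ.filter fun i => leftmost (bounceTab D.T) i = c).image rl' =
    (Finset.univ.filter fun i => leftmost (bounceTab D.T) i = c).image D.rl)

/-- `cl'` is the column labelling of the bounce ribbon of `D` induced by `D`. -/
def InducedCols (D : Labelled m n) (cl' : Equiv.Perm (Fin (n + 1))) : Prop :=
  (∀ j j' : Fin (n + 1), topmost (bounceTab D.T) j = topmost (bounceTab D.T) j' →
    j < j' → cl' j < cl' j') ∧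
  (∀ c : ℕ,
    (Finset.univ.filter fun j => topmost (bounceTab D.T) j = c).image cl' =
    (Finset.univ.filter fun j => topmost (bounceTab D.T) j = c).image D.cl)

/-- The surplus of the row label `v i`: the position of the leftmost 1 of the row
of the bounce ribbon labelled `v i` minus the position of the leftmost 1 of the
row of `D` labelled `v i`. -/
noncomputable def surpRow (D : Labelled m n) (rl' : Equiv.Perm (Fin (m + 1)))
    (i : Fin (m + 1)) : ℤ :=
  (leftmost (bounceTab D.T) (rl'.symm i) : ℤ) - (leftmost D.T (D.rl.symm i) : ℤ)

/-- The surplus of the column label `v ((m+1)+j)`. -/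
noncomputable def surpCol (D : Labelled m n) (cl' : Equiv.Perm (Fin (n + 1)))
    (j : Fin (n + 1)) : ℤ :=
  (topmost (bounceTab D.T) (cl'.symm j) : ℤ) - (topmost D.T (D.cl.symm j) : ℤ)


/-- In an EW-tableau, the 1-sets of any two columns are comparable. -/
lemma colCompare (T : Tab m n) (hT : IsEW T) (c c' : Fin (n+1)) :
    (∀ i, T i c = true → T i c' = true) ∨ (∀ i, T i c' = true → T i c = true) := by
  by_contra hcon
  push_neg at hcon
  obtain ⟨⟨i1, h1, h1'⟩, ⟨i2, h2, h2'⟩⟩ := hcon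
  have hii : i1 ≠ i2 := by rintro rfl; exact h2' h1
  have hcc : c ≠ c' := by rintro rfl; exact h1' h1
  rcases hT.2.2 i1 i2 c c' hii hcc h1 h2 with h | h
  · exact h1' h
  · exact h2' h

/-- In the sorted tableau of an EW-tableau, each row is right-closed. -/
lemma sorted_row_mono (T : Tab m n) (hT : IsEW T) (i : Fin (m+1)) (j j' : Fin (n+1))
    (hjj : j ≤ j') (hS : sortedTab T i j = true) : sortedTab T i j' = true := by
  set τ := sortCols T with hτ
  have hmono := Tuple.monotone_sort (fun j => (Finset.univ.filter fun i => T i j = true).card) hjj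
  simp only [Function.comp] at hmono
  rcases colCompare T hT (τ j) (τ j') with h | h
  · exact h _ hS
  · have hsub : (Finset.univ.filter fun i => T i (τ j') = true) ⊆
        (Finset.univ.filter fun i => T i (τ j) = true) := by
      intro x hx
      simp only [Finset.mem_filter, Finset.mem_univ, true_and] at hx ⊢
      exact h _ hx
    have heq := Finset.eq_of_subset_of_card_le hsub hmono
    have : sortRows T i ∈ (Finset.univ.filter fun x => T x (τ j') = true) := by
      rw [heq]
      simp only [Finset.mem_filter, Finset.mem_univ, true_and]
      exact hS
    simp at this; exact this

/-- A row of an EW-tableau that is all 1s must be the top row. -/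
lemma row_allones (T : Tab m n) (hT : IsEW T) (r : Fin (m+1))
    (hr : ∀ j, T r j = true) : r = 0 := by
  by_contra hne
  obtain ⟨j, hj⟩ := hT.2.1 r hne
  rw [hr j] at hj; exact absurd hj (by simp)

/-- The top row of the sorted tableau of an EW-tableau is all 1s. -/
lemma sorted_row0 (T : Tab m n) (hT : IsEW T) (j : Fin (n+1)) :
    sortedTab T 0 j = true := by
  set g := fun i => (Finset.univ.filter fun j : Fin (n+1) => T i j = false).card with hg
  have hsr : sortRows T = Tuple.sort g := rfl
  have h0 : g 0 = 0 := by
    simp only [hg, Finset.card_eq_zero, Finset.filter_eq_empty_iff]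
    intro x _
    simp [hT.1 x]
  have hmono := Tuple.monotone_sort g (Fin.zero_le ((Tuple.sort g).symm 0))
  simp only [Function.comp, Equiv.apply_symm_apply, h0] at hmono
  have hz : g (Tuple.sort g 0) = 0 := Nat.le_zero.mp hmono
  simp only [hg, Finset.card_eq_zero, Finset.filter_eq_empty_iff] at hz
  have := hz (Finset.mem_univ (sortCols T j))
  simp only [sortedTab, hsr, Bool.not_eq_false] at this ⊢
  exact this

/-- Every non-top row of the sorted tableau of an EW-tableau contains a 0. -/
lemma sorted_rowpos (T : Tab m n) (hT : IsEW T) (i : Fin (m+1)) (hi : i ≠ 0) :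
    ∃ j, sortedTab T i j = false := by
  by_contra hcon
  push_neg at hcon
  simp only [Bool.ne_false_iff] at hcon
  set g := fun i => (Finset.univ.filter fun j : Fin (n+1) => T i j = false).card with hg
  have hsr : sortRows T = Tuple.sort g := rfl
  have hall : ∀ c, T (Tuple.sort g i) c = true := by
    intro c
    have := hcon ((sortCols T).symm c)
    simpa [sortedTab, hsr] using this
  have hgi : g (Tuple.sort g i) = 0 := by
    simp only [hg, Finset.card_eq_zero, Finset.filter_eq_empty_iff]
    intro x _
    have hx := hall x; rw [hg] at hx; simp [hx]
  have hmono := Tuple.monotone_sort g (Fin.zero_le i)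
  simp only [Function.comp, hgi] at hmono
  have hz : g (Tuple.sort g 0) = 0 := Nat.le_zero.mp hmono
  simp only [hg, Finset.card_eq_zero, Finset.filter_eq_empty_iff] at hz
  have h0 : Tuple.sort g 0 = 0 := by
    apply row_allones T hT
    intro c
    have := hz (Finset.mem_univ c)
    simpa using this
  have hiz : Tuple.sort g i = 0 := row_allones T hT _ hall
  exact hi ((Tuple.sort g).injective (hiz.trans h0.symm))

/-- Recovery of a right-closed tableau from its Step-4 image, on rows containing a 0. -/
lemma recover (S : Tab m n)
    (hR : ∀ (i : Fin (m+1)) (j j' : Fin (n+1)), j ≤ j' → S i j = true → S i j' = true)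
    (i : Fin (m+1)) (hpos : ∃ j0, S i j0 = false) (j : Fin (n+1)) :
    S i j = true ↔ ∃ k : Fin (n+1), k < j ∧ step4 S i k = true := by
  constructor
  · intro hj
    obtain ⟨j0, hj0⟩ := hpos
    have hj0j : j0 < j := by
      by_contra hle
      push_neg at hle
      have := hR i j j0 hle hj
      rw [this] at hj0; exact absurd hj0 (by simp)
    set F : Finset (Fin (n+1)) := Finset.univ.filter (fun k => k < j ∧ S i k = false) with hF
    have hne : F.Nonempty := ⟨j0, by simp [hF, hj0j, hj0]⟩
    set k := F.max' hne with hk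
    have hkmem := F.max'_mem hne
    simp only [hF, Finset.mem_filter, Finset.mem_univ, true_and] at hkmem
    obtain ⟨hkj, hkf⟩ := hkmem
    have hkn : (k:ℕ) + 1 < n + 1 := by
      have h1 : (k:ℕ) < (j:ℕ) := hkj
      have h2 := j.isLt
      omega
    have hnext : S i ⟨(k:ℕ)+1, hkn⟩ = true := by
      rcases Nat.lt_or_ge ((k:ℕ)+1) (j:ℕ) with hlt | hge
      · by_contra hfalse
        simp only [Bool.not_eq_true] at hfalse
        have hmem : (⟨(k:ℕ)+1, hkn⟩ : Fin (n+1)) ∈ F := by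
          rw [hF, Finset.mem_filter]
          exact ⟨Finset.mem_univ _, by rw [Fin.lt_def]; exact hlt, hfalse⟩
        have hle := F.le_max' _ hmem
        rw [← hk] at hle
        have : (k:ℕ)+1 ≤ (k:ℕ) := hle
        omega
      · have heq : (⟨(k:ℕ)+1, hkn⟩ : Fin (n+1)) = j := by
          apply Fin.ext
          have : (k:ℕ) < (j:ℕ) := hkj
          simpa using by omega
        rw [heq]; exact hj
    refine ⟨k, hkj, ?_⟩
    simp only [step4, Bool.or_eq_true, Bool.and_eq_true, decide_eq_true_eq]
    right
    refine ⟨by simp; exact hkf, ?_⟩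
    intro j' hj'
    have : j' = ⟨(k:ℕ)+1, hkn⟩ := Fin.ext hj'
    rw [this]; exact hnext
  · rintro ⟨k, hkj, hk⟩
    simp only [step4, Bool.or_eq_true, Bool.and_eq_true, decide_eq_true_eq,
      Bool.not_eq_true'] at hk
    rcases hk with ⟨h1, _⟩ | ⟨h0, h2⟩
    · exact hR i k j (le_of_lt hkj) h1
    · have hkn : (k:ℕ) + 1 < n + 1 := by
        have h1 : (k:ℕ) < (j:ℕ) := hkj
        have h2 := j.isLt
        omega
      have hval := h2 ⟨(k:ℕ)+1, hkn⟩ rfl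
      exact hR i ⟨(k:ℕ)+1, hkn⟩ j (by rw [Fin.le_def]; exact hkj) hval

/-- The map `φ : EW → LRib` is injective. -/
theorem phi_injective {m n : ℕ} (A B : Tab m n) (hA : IsEW A) (hB : IsEW B)
    (h : phi A = phi B) : A = B := by
  have h1 : step4 (sortedTab A) = step4 (sortedTab B) := congrArg Labelled.T h
  have h2 : sortRows A = sortRows B := congrArg Labelled.rl h
  have h3 : sortCols A = sortCols B := congrArg Labelled.cl h
  have hS : sortedTab A = sortedTab B := by
    funext i j
    by_cases hi : i = 0
    · subst hi; rw [sorted_row0 A hA j, sorted_row0 B hB j]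
    · have hAiff := recover (sortedTab A) (fun i j j' => sorted_row_mono A hA i j j')
        i (sorted_rowpos A hA i hi) j
      have hBiff := recover (sortedTab B) (fun i j j' => sorted_row_mono B hB i j j')
        i (sorted_rowpos B hB i hi) j
      rw [h1] at hAiff
      have hiff : sortedTab A i j = true ↔ sortedTab B i j = true := hAiff.trans hBiff.symm
      cases hx : sortedTab A i j
      · cases hy : sortedTab B i j
        · rfl
        · exact absurd (hiff.mpr hy) (by simp [hx])
      · rw [hiff.mp hx]
  funext r c
  have key := congrFun (congrFun hS ((sortRows A).symm r)) ((sortCols A).symm c)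
  simp only [sortedTab, ← h2, ← h3, Equiv.apply_symm_apply] at key
  exact key

end EWPaper
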